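/- For any measurable classifier h : X → [0,1], max_{s∈{0,1}} L_s(h) ≥ (1/2)(max_{s∈{0,1}} E_{X∼P_s}[|y₁(X) − y₀(X)|] − D_TV(P₀, P₁)). In particular, no group-blind classifier can achieve small risk on both groups when the labeling functions disagree substantially and the unlabeled distributions are close. -/

import Mathlib

open MeasureTheory

/-- Group risk under ℓ₁ loss. -/
noncomputable def risk {X : Type*} [MeasurableSpace X]
    (P : Measure X) (y h : X → ℝ) : ℝ := ∫ x, |h x - y x| ∂P

/-- Total variation distance `sup_E |P₀(E) − P₁(E)|` over measurable sets. -/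
noncomputable def tvDist {X : Type*} [MeasurableSpace X] (P Q : Measure X) : ℝ :=
  sSup {d | ∃ E : Set X, MeasurableSet E ∧ d = |(P E).toReal - (Q E).toReal|}

lemma tvDist_comm' {X : Type*} [MeasurableSpace X] (P Q : Measure X) :
    tvDist P Q = tvDist Q P := by
  unfold tvDist
  congr 1
  ext d
  constructor
  · rintro ⟨E, hE, rfl⟩; exact ⟨E, hE, (abs_sub_comm _ _)⟩
  · rintro ⟨E, hE, rfl⟩; exact ⟨E, hE, (abs_sub_comm _ _)⟩

lemma bddAbove_tvSet {X : Type*} [MeasurableSpace X] (P Q : Measure X)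
    [IsProbabilityMeasure P] [IsProbabilityMeasure Q] :
    BddAbove {d | ∃ E : Set X, MeasurableSet E ∧ d = |(P E).toReal - (Q E).toReal|} := by
  refine ⟨1, ?_⟩
  rintro d ⟨E, hE, rfl⟩
  have hP : (P E).toReal ≤ 1 := by
    have := prob_le_one (μ := P) (s := E)
    simpa using ENNReal.toReal_le_of_le_ofReal zero_le_one (by simpa)
  have hQ : (Q E).toReal ≤ 1 := by
    have := prob_le_one (μ := Q) (s := E)
    simpa using ENNReal.toReal_le_of_le_ofReal zero_le_one (by simpa)
  have hP0 : 0 ≤ (P E).toReal := ENNReal.toReal_nonneg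
  have hQ0 : 0 ≤ (Q E).toReal := ENNReal.toReal_nonneg
  rw [abs_sub_le_iff]; constructor <;> linarith

lemma le_tvDist {X : Type*} [MeasurableSpace X] (P Q : Measure X)
    [IsProbabilityMeasure P] [IsProbabilityMeasure Q] {E : Set X} (hE : MeasurableSet E) :
    |(P E).toReal - (Q E).toReal| ≤ tvDist P Q :=
  le_csSup (bddAbove_tvSet P Q) ⟨E, hE, rfl⟩

lemma integrable_of_bdd {X : Type*} [MeasurableSpace X] (μ : Measure X) [IsFiniteMeasure μ]
    {f : X → ℝ} (hf : Measurable f) (h0 : ∀ x, 0 ≤ f x) (h1 : ∀ x, f x ≤ 1) :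
    Integrable f μ := by
  refine (integrable_const (1 : ℝ)).mono' hf.aestronglyMeasurable ?_
  refine Filter.Eventually.of_forall fun x => ?_
  rw [Real.norm_eq_abs, abs_of_nonneg (h0 x)]
  exact h1 x

lemma integral_le_integral_add_tvDist {X : Type*} [MeasurableSpace X]
    (P Q : Measure X) [IsProbabilityMeasure P] [IsProbabilityMeasure Q]
    {f : X → ℝ} (hf : Measurable f) (h0 : ∀ x, 0 ≤ f x) (h1 : ∀ x, f x ≤ 1) :
    ∫ x, f x ∂P ≤ ∫ x, f x ∂Q + tvDist P Q := by
  obtain ⟨s, hs, hsP, hsQ⟩ := hahn_decomposition (μ := P) (ν := Q)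
  have hQP : Q.restrict s ≤ P.restrict s := by
    refine Measure.le_iff.2 fun t ht => ?_
    rw [Measure.restrict_apply ht, Measure.restrict_apply ht]
    exact hsP _ (ht.inter hs) Set.inter_subset_right
  have hPQ : P.restrict sᶜ ≤ Q.restrict sᶜ := by
    refine Measure.le_iff.2 fun t ht => ?_
    rw [Measure.restrict_apply ht, Measure.restrict_apply ht]
    exact hsQ _ (ht.inter hs.compl) Set.inter_subset_right
  set ν : Measure X := P.restrict s - Q.restrict s with hν
  have hadd : ν + Q.restrict s = P.restrict s := Measure.sub_add_cancel_of_le hQP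
  have hνfin : IsFiniteMeasure ν := by
    constructor
    have : ν Set.univ ≤ P.restrict s Set.univ := by
      rw [← hadd]; exact le_add_right le_rfl
    exact lt_of_le_of_lt this (measure_lt_top _ _)
  have intP : Integrable f P := integrable_of_bdd P hf h0 h1
  have intQ : Integrable f Q := integrable_of_bdd Q hf h0 h1
  have intν : Integrable f ν := integrable_of_bdd ν hf h0 h1
  have intQs : Integrable f (Q.restrict s) := integrable_of_bdd _ hf h0 h1
  -- split P integral
  have hsplitP : ∫ x, f x ∂P = ∫ x in s, f x ∂P + ∫ x in sᶜ, f x ∂P :=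
    (integral_add_compl hs intP).symm
  have hsplitQ : ∫ x, f x ∂Q = ∫ x in s, f x ∂Q + ∫ x in sᶜ, f x ∂Q :=
    (integral_add_compl hs intQ).symm
  have hPs : ∫ x in s, f x ∂P = ∫ x, f x ∂ν + ∫ x in s, f x ∂Q := by
    rw [← hadd, integral_add_measure intν intQs]
  have hνle : ∫ x, f x ∂ν ≤ (ν Set.univ).toReal := by
    calc ∫ x, f x ∂ν ≤ ∫ _, (1 : ℝ) ∂ν := integral_mono intν (integrable_const 1) h1
    _ = (ν Set.univ).toReal := by simp; rfl
  have hQsPs : Q s ≤ P s := hsP s hs subset_rfl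
  have hνuniv : (ν Set.univ).toReal = (P s).toReal - (Q s).toReal := by
    rw [hν, Measure.sub_apply MeasurableSet.univ hQP,
      Measure.restrict_apply MeasurableSet.univ, Measure.restrict_apply MeasurableSet.univ,
      Set.univ_inter]
    exact ENNReal.toReal_sub_of_le hQsPs (measure_ne_top _ _)
  have htv : (P s).toReal - (Q s).toReal ≤ tvDist P Q :=
    le_trans (le_abs_self _) (le_tvDist P Q hs)
  have hcompl : ∫ x in sᶜ, f x ∂P ≤ ∫ x in sᶜ, f x ∂Q := by
    refine integral_mono_measure hPQ (Filter.Eventually.of_forall fun x => h0 x) ?_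
    exact integrable_of_bdd _ hf h0 h1
  linarith [hsplitP, hsplitQ, hPs, hνle, hνuniv, htv, hcompl]

theorem group_blind_impossibility {X : Type*} [MeasurableSpace X]
    (P₀ P₁ : Measure X) [IsProbabilityMeasure P₀] [IsProbabilityMeasure P₁]
    (y₀ y₁ : X → ℝ) (hy₀ : Measurable y₀) (hy₁ : Measurable y₁)
    (hy₀01 : ∀ x, y₀ x ∈ Set.Icc (0:ℝ) 1) (hy₁01 : ∀ x, y₁ x ∈ Set.Icc (0:ℝ) 1)
    (h : X → ℝ) (hh : Measurable h) (hh01 : ∀ x, h x ∈ Set.Icc (0:ℝ) 1) :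
    max (risk P₀ y₀ h) (risk P₁ y₁ h) ≥
      (1 / 2) * (max (∫ x, |y₁ x - y₀ x| ∂P₀) (∫ x, |y₁ x - y₀ x| ∂P₁)
        - tvDist P₀ P₁) := by
  have habs01 : ∀ (a b : X → ℝ), (∀ x, a x ∈ Set.Icc (0:ℝ) 1) → (∀ x, b x ∈ Set.Icc (0:ℝ) 1) →
      ∀ x, 0 ≤ |a x - b x| ∧ |a x - b x| ≤ 1 := by
    intro a b ha hb x
    refine ⟨abs_nonneg _, ?_⟩
    have := ha x; have := hb x
    rw [abs_sub_le_iff]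
    constructor <;> (simp [Set.mem_Icc] at *; linarith)
  have h0m : Measurable fun x => |h x - y₀ x| := (hh.sub hy₀).abs
  have h1m : Measurable fun x => |h x - y₁ x| := (hh.sub hy₁).abs
  have hym : Measurable fun x => |y₁ x - y₀ x| := (hy₁.sub hy₀).abs
  have h0b := habs01 h y₀ hh01 hy₀01
  have h1b := habs01 h y₁ hh01 hy₁01
  have hyb := habs01 y₁ y₀ hy₁01 hy₀01
  have int0 : ∀ (μ : Measure X) [IsFiniteMeasure μ], Integrable (fun x => |h x - y₀ x|) μ :=
    fun μ _ => integrable_of_bdd μ h0m (fun x => (h0b x).1) (fun x => (h0b x).2)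
  have int1 : ∀ (μ : Measure X) [IsFiniteMeasure μ], Integrable (fun x => |h x - y₁ x|) μ :=
    fun μ _ => integrable_of_bdd μ h1m (fun x => (h1b x).1) (fun x => (h1b x).2)
  -- triangle inequality pointwise
  have htri : ∀ (μ : Measure X) [IsProbabilityMeasure μ],
      ∫ x, |y₁ x - y₀ x| ∂μ ≤ ∫ x, |h x - y₀ x| ∂μ + ∫ x, |h x - y₁ x| ∂μ := by
    intro μ _
    calc ∫ x, |y₁ x - y₀ x| ∂μ ≤ ∫ x, (|h x - y₀ x| + |h x - y₁ x|) ∂μ := by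
          refine integral_mono (integrable_of_bdd μ hym (fun x => (hyb x).1)
            (fun x => (hyb x).2)) ((int0 μ).add (int1 μ)) fun x => ?_
          calc |y₁ x - y₀ x| ≤ |y₁ x - h x| + |h x - y₀ x| := abs_sub_le _ _ _
          _ = |h x - y₀ x| + |h x - y₁ x| := by rw [abs_sub_comm (y₁ x)]; ring
    _ = ∫ x, |h x - y₀ x| ∂μ + ∫ x, |h x - y₁ x| ∂μ := integral_add (int0 μ) (int1 μ)
  have key01 : ∫ x, |h x - y₁ x| ∂P₀ ≤ ∫ x, |h x - y₁ x| ∂P₁ + tvDist P₀ P₁ :=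
    integral_le_integral_add_tvDist P₀ P₁ h1m (fun x => (h1b x).1) (fun x => (h1b x).2)
  have key10 : ∫ x, |h x - y₀ x| ∂P₁ ≤ ∫ x, |h x - y₀ x| ∂P₀ + tvDist P₀ P₁ := by
    rw [tvDist_comm' P₀ P₁]
    exact integral_le_integral_add_tvDist P₁ P₀ h0m (fun x => (h0b x).1) (fun x => (h0b x).2)
  have hb0 : ∫ x, |y₁ x - y₀ x| ∂P₀ ≤ risk P₀ y₀ h + risk P₁ y₁ h + tvDist P₀ P₁ := by
    have := htri P₀; unfold risk; linarith
  have hb1 : ∫ x, |y₁ x - y₀ x| ∂P₁ ≤ risk P₀ y₀ h + risk P₁ y₁ h + tvDist P₀ P₁ := by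
    have := htri P₁; unfold risk; linarith
  have hmax : max (∫ x, |y₁ x - y₀ x| ∂P₀) (∫ x, |y₁ x - y₀ x| ∂P₁) ≤
      risk P₀ y₀ h + risk P₁ y₁ h + tvDist P₀ P₁ := max_le hb0 hb1
  have hr0 : risk P₀ y₀ h ≤ max (risk P₀ y₀ h) (risk P₁ y₁ h) := le_max_left _ _
  have hr1 : risk P₁ y₁ h ≤ max (risk P₀ y₀ h) (risk P₁ y₁ h) := le_max_right _ _
  linarith
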